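/- Let Ω be a measure space, p ≥ 1, and let {f_n} be a sequence in L^p(Ω) such that f_{n+1} is a subvector of f_n for all n (i.e., f_{n+1}(t) = f_n(t) for almost every t with f_{n+1}(t) ≠ 0). Then {f_n} converges pointwise almost everywhere and in the L^p norm. -/

import Mathlib

open MeasureTheory Filter
open scoped ENNReal NNReal

/-- For a sequence with the subvector property pointwise, it is eventually constant. -/
lemma aux_evconst (a : ℕ → ℂ) (h : ∀ n, a (n + 1) ≠ 0 → a (n + 1) = a n) :
    ∃ L : ℂ, (∀ᶠ n in atTop, a n = L) := by
  by_cases hz : ∃ N, a N = 0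
  · obtain ⟨N, hN⟩ := hz
    refine ⟨0, eventually_atTop.2 ⟨N, fun n hn => ?_⟩⟩
    induction n with
    | zero => simpa [Nat.le_zero.mp hn] using hN
    | succ m ih =>
      rcases Nat.lt_or_ge N (m + 1) with h' | h'
      · have hm : a m = 0 := ih (Nat.lt_succ_iff.mp h')
        by_contra hne
        exact hne ((h m hne).trans hm)
      · have : N = m + 1 := le_antisymm hn h'
        rwa [← this]
  · push_neg at hz
    refine ⟨a 0, Eventually.of_forall fun n => ?_⟩
    induction n with
    | zero => rfl
    | succ m ih => rw [h m (hz (m + 1)), ih]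

lemma aux_bound (a : ℕ → ℂ) (h : ∀ n, a (n + 1) ≠ 0 → a (n + 1) = a n) :
    ∀ n, ‖a n‖ ≤ ‖a 0‖ := by
  intro n
  induction n with
  | zero => exact le_refl _
  | succ m ih =>
    by_cases hne : a (m + 1) = 0
    · simp [hne]
    · rw [h m hne]; exact ih

theorem stmt5 {X : Type*} [MeasurableSpace X] (μ : Measure X) (p : ℝ) (hp : 1 ≤ p)
    (f : ℕ → X → ℂ) (hf : ∀ n, MemLp (f n) (ENNReal.ofReal p) μ)
    (hsub : ∀ n, ∀ᵐ t ∂μ, f (n + 1) t ≠ 0 → f (n + 1) t = f n t) :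
    ∃ g : X → ℂ,
      (∀ᵐ t ∂μ, Tendsto (fun n => f n t) atTop (nhds (g t))) ∧
      Tendsto (fun n => eLpNorm (f n - g) (ENNReal.ofReal p) μ) atTop (nhds 0) := by
  have hp0 : 0 < p := lt_of_lt_of_le one_pos hp
  set q : ℝ≥0∞ := ENNReal.ofReal p with hq
  have hq0 : q ≠ 0 := by simp [hq, ENNReal.ofReal_eq_zero, not_le, hp0]
  have hqtop : q ≠ ⊤ := ENNReal.ofReal_ne_top
  have hqr : q.toReal = p := ENNReal.toReal_ofReal hp0.le
  set g : X → ℂ := fun t => limUnder atTop (fun n => f n t) with hg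
  have hae : ∀ᵐ t ∂μ, ∀ n, f (n + 1) t ≠ 0 → f (n + 1) t = f n t := ae_all_iff.2 hsub
  -- pointwise convergence a.e.
  have hconv : ∀ᵐ t ∂μ, Tendsto (fun n => f n t) atTop (nhds (g t)) := by
    filter_upwards [hae] with t ht
    obtain ⟨L, hL⟩ := aux_evconst (fun n => f n t) ht
    have hT : Tendsto (fun n => f n t) atTop (nhds L) :=
      tendsto_const_nhds.congr' (hL.mono fun n hn => hn.symm)
    have : g t = L := hT.limUnder_eq
    rwa [this]
  refine ⟨g, hconv, ?_⟩
  -- norm bounds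
  have hbnd : ∀ᵐ t ∂μ, ∀ n, ‖f n t - g t‖ ≤ 2 * ‖f 0 t‖ := by
    filter_upwards [hae, hconv] with t ht htend n
    have h1 : ∀ m, ‖f m t‖ ≤ ‖f 0 t‖ := aux_bound (fun n => f n t) ht
    have h2 : ‖g t‖ ≤ ‖f 0 t‖ :=
      le_of_tendsto' (htend.norm) h1
    calc ‖f n t - g t‖ ≤ ‖f n t‖ + ‖g t‖ := norm_sub_le _ _
      _ ≤ ‖f 0 t‖ + ‖f 0 t‖ := add_le_add (h1 n) h2
      _ = 2 * ‖f 0 t‖ := (two_mul _).symm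
  have hgmeas : AEStronglyMeasurable g μ :=
    aestronglyMeasurable_of_tendsto_ae atTop (fun n => (hf n).1) hconv
  -- lintegral convergence via dominated convergence
  have hmeas : ∀ n, AEMeasurable (fun t => (‖f n t - g t‖₊ : ℝ≥0∞) ^ p) μ := fun n =>
    (((hf n).1.sub hgmeas).enorm).pow_const p
  have hboundint : ∫⁻ t, (2 * (‖f 0 t‖₊ : ℝ≥0∞)) ^ p ∂μ < ⊤ := by
    have h0 : ∫⁻ t, (‖f 0 t‖₊ : ℝ≥0∞) ^ p ∂μ < ⊤ := by
      have := lintegral_rpow_enorm_lt_top_of_eLpNorm_lt_top hq0 hqtop (hf 0).2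
      rwa [hqr] at this
    calc ∫⁻ t, (2 * (‖f 0 t‖₊ : ℝ≥0∞)) ^ p ∂μ
        = ∫⁻ t, 2 ^ p * (‖f 0 t‖₊ : ℝ≥0∞) ^ p ∂μ := by
          congr 1; funext t; rw [ENNReal.mul_rpow_of_nonneg _ _ hp0.le]
      _ = 2 ^ p * ∫⁻ t, (‖f 0 t‖₊ : ℝ≥0∞) ^ p ∂μ := lintegral_const_mul'' _ (((hf 0).1.enorm).pow_const p)
      _ < ⊤ := ENNReal.mul_lt_top (by simp [ENNReal.rpow_lt_top_of_nonneg hp0.le]) h0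
  have hptw : ∀ᵐ t ∂μ, Tendsto (fun n => (‖f n t - g t‖₊ : ℝ≥0∞) ^ p) atTop (nhds 0) := by
    filter_upwards [hconv] with t ht
    have h1 : Tendsto (fun n => f n t - g t) atTop (nhds 0) := by
      simpa using ht.sub (tendsto_const_nhds (x := g t))
    have h2 : Tendsto (fun n => (‖f n t - g t‖₊ : ℝ≥0∞)) atTop (nhds 0) := by
      have h3 : Tendsto (fun n => ‖f n t - g t‖₊) atTop (nhds 0) := by
        simpa [Function.comp_def] using (continuous_nnnorm.tendsto (0 : ℂ)).comp h1
      simpa [Function.comp_def] using (ENNReal.continuous_coe.tendsto 0).comp h3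
    have := (ENNReal.continuous_rpow_const (y := p)).tendsto 0 |>.comp h2
    simpa [ENNReal.zero_rpow_of_pos hp0, Function.comp_def] using this
  have hdom : ∀ n, ∀ᵐ t ∂μ, (‖f n t - g t‖₊ : ℝ≥0∞) ^ p ≤ (2 * (‖f 0 t‖₊ : ℝ≥0∞)) ^ p := by
    intro n
    filter_upwards [hbnd] with t ht
    apply ENNReal.rpow_le_rpow _ hp0.le
    have : (‖f n t - g t‖₊ : ℝ≥0) ≤ 2 * ‖f 0 t‖₊ := by
      rw [← NNReal.coe_le_coe]; push_cast; simpa using ht n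
    calc (‖f n t - g t‖₊ : ℝ≥0∞) ≤ ((2 * ‖f 0 t‖₊ : ℝ≥0) : ℝ≥0∞) := ENNReal.coe_le_coe.2 this
      _ = 2 * (‖f 0 t‖₊ : ℝ≥0∞) := by push_cast; ring
  have hlint : Tendsto (fun n => ∫⁻ t, (‖f n t - g t‖₊ : ℝ≥0∞) ^ p ∂μ) atTop (nhds 0) := by
    have := tendsto_lintegral_of_dominated_convergence' _ hmeas hdom hboundint.ne hptw
    simpa using this
  -- conclude
  have hform : ∀ n, eLpNorm (f n - g) q μ
      = (∫⁻ t, (‖f n t - g t‖₊ : ℝ≥0∞) ^ p ∂μ) ^ (1 / p) := by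
    intro n
    rw [eLpNorm_eq_lintegral_rpow_enorm_toReal hq0 hqtop, hqr]
    rfl
  have := (ENNReal.continuous_rpow_const (y := 1 / p)).tendsto 0 |>.comp hlint
  simp only [Function.comp_def] at this
  rw [show ((0 : ℝ≥0∞) ^ (1 / p)) = 0 from ENNReal.zero_rpow_of_pos (by positivity)] at this
  refine this.congr fun n => (hform n).symm
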